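/- Let s, t ∈ A with t ≠ 0 and suppose (ε^q + s)(ε + s) = t·t' for some t' ∈ A. Then: (a) the A-submodule J := tA + (ε + s)A of K̃ is an ideal of Ã = A + εA; (b) J does not depend on the choice of ε: if ε' ∈ K̃ also satisfies ε' ∉ K, ε'^{q²} = ε', ε'^q ≠ ε' (so that ε' = αε + β for some α in the image of 𝔽_q^× and β in the image of 𝔽_q), and ω = (ε + s)/t is written as ω = (ε' + s₁)/t₁ with s₁, t₁ ∈ A, then t₁A + (ε' + s₁)A = tA + (ε + s)A. -/

import Mathlib

open Matrix Polynomial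

/-- Any element of a field fixed by `x ↦ x^q` lies in the image of `Fq`, `q = |Fq|`. -/
lemma aux_fixed {Fq Kt : Type*} [Field Fq] [Fintype Fq] [Field Kt] (φ : Fq →+* Kt)
    {q : ℕ} (hq : Fintype.card Fq = q) {x : Kt} (hx : x ^ q = x) : x ∈ Set.range φ := by
  classical
  have hq2 : 2 ≤ q := hq ▸ Fintype.one_lt_card
  set P : Polynomial Kt := X ^ q - X with hP
  have hdeg : P.natDegree = q := by
    rw [hP, Polynomial.natDegree_sub_eq_left_of_natDegree_lt] <;>
      simp [Polynomial.natDegree_X_pow] <;> omega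
  have hP0 : P ≠ 0 := fun h => by simp [h] at hdeg; omega
  have hroot : ∀ y : Kt, y ^ q = y → y ∈ P.roots.toFinset := by
    intro y hy
    simp [Multiset.mem_toFinset, Polynomial.mem_roots, hP0, Polynomial.IsRoot, hP, hy,
      sub_eq_zero]
    exact fun h => hP0 (by rw [hP, h, sub_self])
  have hsub : Finset.univ.image φ ⊆ P.roots.toFinset := by
    intro y hy
    simp only [Finset.mem_image] at hy
    obtain ⟨a, -, rfl⟩ := hy
    refine hroot _ ?_
    rw [← map_pow]
    congr 1
    rw [← hq]
    exact FiniteField.pow_card a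
  have hcard : P.roots.toFinset.card ≤ (Finset.univ.image φ).card := by
    rw [Finset.card_image_of_injective _ φ.injective, Finset.card_univ, hq]
    exact le_trans (Multiset.toFinset_card_le _) (le_trans (Polynomial.card_roots' P) hdeg.le)
  have heq := Finset.eq_of_subset_of_card_le hsub hcard
  have hxm := hroot x hx
  rw [← heq] at hxm
  simp only [Finset.mem_image] at hxm
  obtain ⟨a, -, rfl⟩ := hxm
  exact ⟨a, rfl⟩


/-- **Lemma 2.1.** For an elliptic element `ω = (ε + s)/t` the `A`-module
`J = tA + (ε + s)A` is an ideal of `Ã = A + εA`, and it does not depend on the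
choice of `ε`. -/
theorem stmt_8 (Fq : Type*) [Field Fq] [Fintype Fq] (q : ℕ) (hq : Fintype.card Fq = q)
    (A : Type*) [CommRing A] [IsDomain A] [IsDedekindDomain A] [Algebra Fq A]
    (K : Type*) [Field K] [Algebra A K] [IsFractionRing A K]
    (Kt : Type*) [Field Kt] [Algebra K Kt] [Algebra A Kt] [IsScalarTower A K Kt]
    (ε : Kt) (hε1 : ε ∉ Set.range (algebraMap K Kt)) (hε2 : ε ^ q ^ 2 = ε)
    (hε3 : ε ^ q ≠ ε) (hgen : Algebra.adjoin K {ε} = ⊤)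
    (s t : A) (ht : t ≠ 0) (t' : A)
    (heq : (ε ^ q + algebraMap A Kt s) * (ε + algebraMap A Kt s) =
      algebraMap A Kt t * algebraMap A Kt t') :
    -- (a) `J = tA + (ε + s)A` is an ideal of `Ã`
    (∀ x ∈ Algebra.adjoin A {ε},
      ∀ j ∈ Submodule.span A ({algebraMap A Kt t, ε + algebraMap A Kt s} : Set Kt),
        x * j ∈ Submodule.span A ({algebraMap A Kt t, ε + algebraMap A Kt s} : Set Kt)) ∧
    -- (b) `J` does not depend on the choice of `ε`
    (∀ ε' : Kt, ε' ∉ Set.range (algebraMap K Kt) → ε' ^ q ^ 2 = ε' → ε' ^ q ≠ ε' →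
      ∀ s₁ t₁ : A,
        (ε + algebraMap A Kt s) / algebraMap A Kt t =
          (ε' + algebraMap A Kt s₁) / algebraMap A Kt t₁ →
        Submodule.span A ({algebraMap A Kt t₁, ε' + algebraMap A Kt s₁} : Set Kt) =
          Submodule.span A ({algebraMap A Kt t, ε + algebraMap A Kt s} : Set Kt)) := by
  classical
  have hAK : Function.Injective (algebraMap A K) := IsFractionRing.injective A K
  have hKKt : Function.Injective (algebraMap K Kt) := (algebraMap K Kt).injective
  have htow : algebraMap A Kt = (algebraMap K Kt).comp (algebraMap A K) :=
    IsScalarTower.algebraMap_eq A K Kt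
  have hAKt_eq : ∀ a : A, algebraMap A Kt a = algebraMap K Kt (algebraMap A K a) :=
    fun a => by rw [htow]; rfl
  have hAKt : Function.Injective (algebraMap A Kt) := by
    rw [htow]; exact hKKt.comp hAK
  -- characteristic bookkeeping
  set p := ringChar Fq with hpdef
  haveI : CharP Fq p := ringChar.charP Fq
  obtain ⟨f, hpprime, hcard⟩ := FiniteField.card Fq p
  haveI : Fact p.Prime := ⟨hpprime⟩
  have hqp : q = p ^ (f : ℕ) := by rw [← hq, hcard]
  set φ : Fq →+* Kt := (algebraMap A Kt).comp (algebraMap Fq A) with hφ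
  haveI : CharP Kt p := charP_of_injective_ringHom φ.injective p
  have frob : ∀ x y : Kt, (x + y) ^ q = x ^ q + y ^ q := by
    intro x y; rw [hqp]; exact add_pow_char_pow x y p (f : ℕ)
  have frob2 : ∀ x y : Kt, (x + y) ^ q ^ 2 = x ^ q ^ 2 + y ^ q ^ 2 := by
    intro x y
    rw [hqp, ← pow_mul]
    exact add_pow_char_pow x y p ((f : ℕ) * 2)
  -- `u := ε + ε^q` is fixed by Frobenius, hence comes from `Fq`, hence from `A`
  have huq : (ε + ε ^ q) ^ q = ε + ε ^ q := by
    rw [frob, ← pow_mul, ← sq, hε2, add_comm]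
  obtain ⟨c0, hc0⟩ := aux_fixed φ hq huq
  set u : A := algebraMap Fq A c0 with hu
  have huA : algebraMap A Kt u = ε + ε ^ q := hc0
  set J := Submodule.span A ({algebraMap A Kt t, ε + algebraMap A Kt s} : Set Kt) with hJ
  have hgen1 : algebraMap A Kt t ∈ J := Submodule.subset_span (by simp)
  have hgen2 : ε + algebraMap A Kt s ∈ J := Submodule.subset_span (by simp)
  have hmul_t : ε * algebraMap A Kt t ∈ J := by
    have hc : ε * algebraMap A Kt t
        = t • (ε + algebraMap A Kt s) - s • algebraMap A Kt t := by
      rw [Algebra.smul_def, Algebra.smul_def]; ring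
    rw [hc]
    exact Submodule.sub_mem _ (Submodule.smul_mem _ _ hgen2) (Submodule.smul_mem _ _ hgen1)
  have hmul_e : ε * (ε + algebraMap A Kt s) ∈ J := by
    have hc : ε * (ε + algebraMap A Kt s)
        = (u + s) • (ε + algebraMap A Kt s) - t' • algebraMap A Kt t := by
      rw [Algebra.smul_def, Algebra.smul_def, map_add]
      linear_combination (-(ε + algebraMap A Kt s)) * huA - heq
    rw [hc]
    exact Submodule.sub_mem _ (Submodule.smul_mem _ _ hgen2) (Submodule.smul_mem _ _ hgen1)
  have hmul_eps : ∀ j ∈ J, ε * j ∈ J := by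
    intro j hj
    induction hj using Submodule.span_induction with
    | mem x hx =>
      simp only [Set.mem_insert_iff, Set.mem_singleton_iff] at hx
      rcases hx with rfl | rfl
      · exact hmul_t
      · exact hmul_e
    | zero => simp
    | add x y hx hy ihx ihy => rw [mul_add]; exact Submodule.add_mem _ ihx ihy
    | smul a x hx ih => rw [mul_smul_comm]; exact Submodule.smul_mem _ _ ih
  constructor
  · -- part (a)
    intro x hx
    induction hx using Algebra.adjoin_induction with
    | mem y hy =>
      rw [Set.mem_singleton_iff] at hy; subst hy
      exact hmul_eps
    | algebraMap a =>
      intro j hj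
      rw [← Algebra.smul_def]
      exact Submodule.smul_mem _ _ hj
    | add x y hx hy ihx ihy =>
      intro j hj
      rw [add_mul]
      exact Submodule.add_mem _ (ihx j hj) (ihy j hj)
    | mul x y hx hy ihx ihy =>
      intro j hj
      rw [mul_assoc]
      exact ihx _ (ihy j hj)
  · -- part (b)
    intro ε' hε1' hε2' hε3' s₁ t₁ hdiv
    have htKt : algebraMap A Kt t ≠ 0 := fun h => ht (hAKt (by rw [h, map_zero]))
    have ht₁ : t₁ ≠ 0 := by
      intro h
      subst h
      rw [map_zero, div_zero, _root_.div_eq_zero_iff] at hdiv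
      rcases hdiv with hdiv | hdiv
      · exact hε1 ⟨-(algebraMap A K s), by
          rw [map_neg, ← hAKt_eq]
          linear_combination -hdiv⟩
      · exact htKt hdiv
    have ht₁Kt : algebraMap A Kt t₁ ≠ 0 := fun h => ht₁ (hAKt (by rw [h, map_zero]))
    have htK0 : algebraMap A K t ≠ 0 := fun h => ht (hAK (by rw [h, map_zero]))
    have ht₁K0 : algebraMap A K t₁ ≠ 0 := fun h => ht₁ (hAK (by rw [h, map_zero]))
    obtain ⟨c', hc'⟩ : ∃ c : K, algebraMap A Kt t₁ = algebraMap K Kt c * algebraMap A Kt t :=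
      ⟨algebraMap A K t₁ / algebraMap A K t, by
        rw [map_div₀, hAKt_eq t, hAKt_eq t₁, div_mul_cancel₀]
        exact fun h => htK0 (hKKt (by rw [h, map_zero]))⟩
    have hc'0 : c' ≠ 0 := fun h => ht₁Kt (by rw [hc', h, map_zero, zero_mul])
    have hcross : (ε + algebraMap A Kt s) * algebraMap A Kt t₁
        = (ε' + algebraMap A Kt s₁) * algebraMap A Kt t := (div_eq_div_iff htKt ht₁Kt).mp hdiv
    have hrel : ε' + algebraMap A Kt s₁ = algebraMap K Kt c' * (ε + algebraMap A Kt s) := by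
      apply mul_right_cancel₀ htKt
      linear_combination (ε + algebraMap A Kt s) * hc' - hcross
    obtain ⟨d, hd⟩ : ∃ d : K, algebraMap K Kt d
        = algebraMap K Kt c' * algebraMap A Kt s - algebraMap A Kt s₁ :=
      ⟨c' * algebraMap A K s - algebraMap A K s₁, by
        rw [map_sub, _root_.map_mul, ← hAKt_eq, ← hAKt_eq]⟩
    have hε'rep : ε' = algebraMap K Kt c' * ε + algebraMap K Kt d := by
      rw [hd]
      linear_combination hrel
    have h1 : algebraMap K Kt c' ^ q ^ 2 * ε + algebraMap K Kt d ^ q ^ 2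
        = algebraMap K Kt c' * ε + algebraMap K Kt d := by
      have h0 : (algebraMap K Kt c' * ε + algebraMap K Kt d) ^ q ^ 2
          = algebraMap K Kt c' * ε + algebraMap K Kt d := by rw [← hε'rep]; exact hε2'
      rw [frob2, mul_pow, hε2] at h0
      exact h0
    have hcfix : c' ^ q ^ 2 = c' := by
      by_contra hne
      have hne2 : algebraMap K Kt (c' ^ q ^ 2 - c') ≠ 0 :=
        fun h => (sub_ne_zero.mpr hne) (hKKt (by rw [h, map_zero]))
      apply hε1
      refine ⟨(d - d ^ q ^ 2) / (c' ^ q ^ 2 - c'), ?_⟩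
      rw [map_div₀, div_eq_iff hne2, map_sub, map_sub, map_pow, map_pow]
      linear_combination -h1
    have hq2 : 2 ≤ q := hq ▸ Fintype.one_lt_card
    have hmonic : (X ^ q ^ 2 - X : Polynomial A).Monic := by
      apply Polynomial.monic_X_pow_sub
      rw [Polynomial.degree_X]
      exact_mod_cast (by nlinarith : 1 < q ^ 2)
    have hint : IsIntegral A c' := by
      refine ⟨X ^ q ^ 2 - X, hmonic, ?_⟩
      simp [hcfix, sub_eq_zero]
    have hinvfix : c'⁻¹ ^ q ^ 2 = c'⁻¹ := by rw [inv_pow, hcfix]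
    have hintinv : IsIntegral A c'⁻¹ := by
      refine ⟨X ^ q ^ 2 - X, hmonic, ?_⟩
      simp [hinvfix, sub_eq_zero]
    obtain ⟨a, ha⟩ := IsIntegrallyClosed.isIntegral_iff.mp hint
    obtain ⟨b, hb⟩ := IsIntegrallyClosed.isIntegral_iff.mp hintinv
    have hab : a * b = 1 := hAK (by
      rw [_root_.map_mul, ha, hb, _root_.map_one, mul_inv_cancel₀ hc'0])
    have haK : algebraMap A Kt a = algebraMap K Kt c' := by rw [hAKt_eq, ha]
    have ht1rel : algebraMap A Kt t₁ = a • algebraMap A Kt t := by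
      rw [Algebra.smul_def, haK, ← hc']
    have herel : ε' + algebraMap A Kt s₁ = a • (ε + algebraMap A Kt s) := by
      rw [Algebra.smul_def, haK]; exact hrel
    have hbrel1 : algebraMap A Kt t = b • algebraMap A Kt t₁ := by
      rw [ht1rel, smul_smul, mul_comm b a, hab, one_smul]
    have hbrel2 : ε + algebraMap A Kt s = b • (ε' + algebraMap A Kt s₁) := by
      rw [herel, smul_smul, mul_comm b a, hab, one_smul]
    apply le_antisymm
    · rw [Submodule.span_le]
      intro x hx
      simp only [Set.mem_insert_iff, Set.mem_singleton_iff] at hx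
      rcases hx with rfl | rfl
      · rw [ht1rel]; exact Submodule.smul_mem _ _ hgen1
      · rw [herel]; exact Submodule.smul_mem _ _ hgen2
    · rw [Submodule.span_le]
      intro x hx
      simp only [Set.mem_insert_iff, Set.mem_singleton_iff] at hx
      rcases hx with rfl | rfl
      · rw [hbrel1]
        exact Submodule.smul_mem _ _ (Submodule.subset_span (by simp))
      · rw [hbrel2]
        exact Submodule.smul_mem _ _ (Submodule.subset_span (by simp))
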